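/- A column C over [±n] is admissible (satisfies the one column condition) if and only if C can be split, i.e., the set J = {t_1 > ... > t_r} of Definition of splitting exists. -/

import Mathlib

/-- The alphabet `[±n] = {1 < 2 < ⋯ < n < n̄ < ⋯ < 1̄}` is encoded as `{1, …, 2n} ⊆ ℕ`
with the usual order, the barred letter `ī` being encoded as `2n+1-i`. -/
def bar (n x : ℕ) : ℕ := 2 * n + 1 - x

/-- A column over `[±n]`: a strictly increasing list with entries in `{1, …, 2n}`. -/
def IsColumn (n : ℕ) (C : List ℕ) : Prop :=
  C.Chain' (· < ·) ∧ ∀ x ∈ C, 1 ≤ x ∧ x ≤ 2 * n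

/-- The one column condition (1CC): for every unbarred `i` with both `i` and `ī` in `C`,
the number of entries `x` with `x ≤ i` or `x ≥ ī` is at most `i`. -/
def OCC (n : ℕ) (C : List ℕ) : Prop :=
  ∀ i, 1 ≤ i → i ≤ n → i ∈ C → bar n i ∈ C →
    C.countP (fun x => decide (x ≤ i ∨ bar n i ≤ x)) ≤ i

/-- The set `I` of unbarred letters `z` such that both `z` and `z̄` occur in `C`,
listed in decreasing order `z₁ > z₂ > ⋯ > z_r`. -/
def Ilist (n : ℕ) (C : List ℕ) : List ℕ :=
  ((List.range (n + 1)).filter (fun z => decide (1 ≤ z ∧ z ∈ C ∧ bar n z ∈ C))).reverse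

/-- The greatest unbarred letter `t < bound` with `t ∉ C` and `t̄ ∉ C`, if any. -/
def pickBelow (n : ℕ) (C : List ℕ) (bound : ℕ) : Option ℕ :=
  ((List.range bound).filter (fun t => decide (1 ≤ t ∧ t ≤ n ∧ t ∉ C ∧ bar n t ∉ C))).max?

/-- The greedy construction of the set `J = {t₁ > ⋯ > t_r}` of Definition of splitting:
`t₁` is the greatest letter `< z₁` with `t₁, t̄₁ ∉ C` and `tᵢ` is the greatest letter
`< min (tᵢ₋₁, zᵢ)` with `tᵢ, t̄ᵢ ∉ C`; returns `none` if at some stage no letter exists. -/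
def splitJ (n : ℕ) (C : List ℕ) : List ℕ → ℕ → Option (List ℕ)
  | [], _ => some []
  | z :: zs, bound =>
    match pickBelow n C (min bound z) with
    | none => none
    | some t => (splitJ n C zs t).map (t :: ·)

def JlistOpt (n : ℕ) (C : List ℕ) : Option (List ℕ) := splitJ n C (Ilist n C) (n + 1)

/-- `C` can be split: the set `J` of the splitting definition exists. -/
def CanSplit (n : ℕ) (C : List ℕ) : Prop := (JlistOpt n C).isSome = true

/-- The set `J = {t₁ > ⋯ > t_r}` (empty if `C` cannot be split). -/
def Jlist (n : ℕ) (C : List ℕ) : List ℕ := (JlistOpt n C).getD []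

def sortCol (L : List ℕ) : List ℕ := L.mergeSort (· ≤ ·)

/-- The right column `rC`: replace each barred `z̄ᵢ` (for `zᵢ ∈ I`) by `t̄ᵢ` and reorder. -/
def rCol (n : ℕ) (C : List ℕ) : List ℕ :=
  sortCol ((C.filter (fun x => decide (x ∉ (Ilist n C).map (bar n)))) ++ (Jlist n C).map (bar n))

/-- The left column `ℓC`: replace each unbarred `zᵢ ∈ I` by `tᵢ` and reorder. -/
def lCol (n : ℕ) (C : List ℕ) : List ℕ :=
  sortCol ((C.filter (fun x => decide (x ∉ Ilist n C))) ++ Jlist n C)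

/-- `Φ(C)`: the column of the same size whose unbarred entries are taken from `ℓC`
and whose barred entries are taken from `rC`. -/
def PhiCol (n : ℕ) (C : List ℕ) : List ℕ :=
  sortCol ((lCol n C).filter (fun x => decide (x ≤ n)) ++
    (rCol n C).filter (fun x => decide (n < x)))


def FreeL (n : ℕ) (C : List ℕ) (t : ℕ) : Prop := 1 ≤ t ∧ t ≤ n ∧ t ∉ C ∧ bar n t ∉ C

instance (n : ℕ) (C : List ℕ) : DecidablePred (FreeL n C) := fun t => by
  unfold FreeL; infer_instance

def Fcnt (n : ℕ) (C : List ℕ) (b : ℕ) : ℕ := ((Finset.range b).filter (FreeL n C)).card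

lemma mem_pickList {n b t : ℕ} {C : List ℕ} :
    t ∈ (List.range b).filter (fun t => decide (1 ≤ t ∧ t ≤ n ∧ t ∉ C ∧ bar n t ∉ C)) ↔
      t < b ∧ FreeL n C t := by
  simp [List.mem_filter, List.mem_range, FreeL]

lemma pickBelow_spec {n b t : ℕ} {C : List ℕ} (h : pickBelow n C b = some t) :
    FreeL n C t ∧ t < b ∧ ∀ a, a < b → FreeL n C a → a ≤ t := by
  have := (List.max?_eq_some_iff).mp h
  obtain ⟨h1, h2⟩ := this
  rw [mem_pickList] at h1
  exact ⟨h1.2, h1.1, fun a ha hfa => h2 a (mem_pickList.mpr ⟨ha, hfa⟩)⟩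

lemma pickBelow_isSome {n b : ℕ} {C : List ℕ} (h : 0 < Fcnt n C b) :
    ∃ t, pickBelow n C b = some t := by
  obtain ⟨a, ha⟩ := Finset.card_pos.mp h
  simp only [Finset.mem_filter, Finset.mem_range] at ha
  have hmem : a ∈ (List.range b).filter
      (fun t => decide (1 ≤ t ∧ t ≤ n ∧ t ∉ C ∧ bar n t ∉ C)) := mem_pickList.mpr ⟨ha.1, ha.2⟩
  cases hp : pickBelow n C b with
  | none =>
    rw [pickBelow, List.max?_eq_none_iff] at hp
    rw [hp] at hmem; simp at hmem
  | some t => exact ⟨t, rfl⟩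

lemma Fcnt_mono {n b b' : ℕ} {C : List ℕ} (h : b ≤ b') : Fcnt n C b ≤ Fcnt n C b' :=
  Finset.card_le_card (Finset.filter_subset_filter _ (Finset.range_subset_range.mpr h))

lemma Fcnt_le_of {n b1 b2 : ℕ} {C : List ℕ} (h : ∀ a, a < b1 → FreeL n C a → a < b2) :
    Fcnt n C b1 ≤ Fcnt n C b2 := by
  apply Finset.card_le_card
  intro a ha
  simp only [Finset.mem_filter, Finset.mem_range] at *
  exact ⟨h a ha.1 ha.2, ha.2⟩

lemma Fcnt_pick {n b t : ℕ} {C : List ℕ} (h : pickBelow n C b = some t) :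
    Fcnt n C b = Fcnt n C t + 1 := by
  obtain ⟨hft, htb, hmax⟩ := pickBelow_spec h
  have : (Finset.range b).filter (FreeL n C) =
      insert t ((Finset.range t).filter (FreeL n C)) := by
    ext a
    simp only [Finset.mem_filter, Finset.mem_range, Finset.mem_insert]
    constructor
    · rintro ⟨hab, hfa⟩
      rcases eq_or_ne a t with h' | h'
      · exact Or.inl h'
      · exact Or.inr ⟨lt_of_le_of_ne (hmax a hab hfa) h', hfa⟩
    · rintro (rfl | ⟨hat, hfa⟩)
      · exact ⟨htb, hft⟩
      · exact ⟨hat.trans htb, hfa⟩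
  rw [Fcnt, this, Finset.card_insert_of_notMem (by simp)]
  rfl

lemma splitJ_isSome_iff (n : ℕ) (C : List ℕ) (zs : List ℕ) (bound : ℕ)
    (hp : zs.Pairwise (· > ·)) :
    (splitJ n C zs bound).isSome = true ↔
      ∀ z ∈ zs, zs.countP (fun y => decide (y ≤ z)) ≤ Fcnt n C (min bound z) := by
  induction zs generalizing bound with
  | nil => simp [splitJ]
  | cons z zs IH =>
    have hzgt : ∀ w ∈ zs, w < z := fun w hw => List.rel_of_pairwise_cons hp hw
    have hcountz : (z :: zs).countP (fun y => decide (y ≤ z)) = zs.length + 1 := by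
      have := List.countP_eq_length.mpr (fun a ha => by
        rcases List.mem_cons.mp ha with rfl | h
        · simp
        · simp [le_of_lt (hzgt a h)] : ∀ a ∈ z :: zs, (fun y => decide (y ≤ z)) a = true)
      simpa using this
    cases hpick : pickBelow n C (min bound z) with
    | none =>
      simp only [splitJ, hpick]
      constructor
      · intro h; simp at h
      · intro H
        exfalso
        have h1 := H z List.mem_cons_self
        rw [hcountz] at h1
        obtain ⟨t, ht⟩ := pickBelow_isSome (lt_of_lt_of_le (Nat.succ_pos _) h1)
        rw [hpick] at ht; cases ht
    | some t =>
      obtain ⟨hft, htb, hmax⟩ := pickBelow_spec hpick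
      have htbound : t ≤ bound := le_of_lt (lt_of_lt_of_le htb (min_le_left _ _))
      have hFz : Fcnt n C (min bound z) = Fcnt n C t + 1 := Fcnt_pick hpick
      have hred : (splitJ n C (z :: zs) bound).isSome = (splitJ n C zs t).isSome := by
        simp [splitJ, hpick]
      rw [hred, IH t hp.of_cons]
      constructor
      · intro H w hw
        rcases List.mem_cons.mp hw with rfl | hwzs
        · rw [hcountz, hFz]
          have hlen : zs.length ≤ Fcnt n C t := by
            cases zs with
            | nil => simp
            | cons w0 ws =>
              have h0 := H w0 List.mem_cons_self
              have hc0 : (w0 :: ws).countP (fun y => decide (y ≤ w0)) = ws.length + 1 := by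
                have := List.countP_eq_length.mpr (fun a ha => by
                  rcases List.mem_cons.mp ha with rfl | h
                  · simp
                  · simp [le_of_lt (List.rel_of_pairwise_cons hp.of_cons h)] :
                    ∀ a ∈ w0 :: ws, (fun y => decide (y ≤ w0)) a = true)
                simpa using this
              rw [hc0] at h0
              calc (w0 :: ws).length = ws.length + 1 := by simp
                _ ≤ Fcnt n C (min t w0) := h0
                _ ≤ Fcnt n C t := Fcnt_mono (min_le_left _ _)
          omega
        · have hwz : w < z := hzgt w hwzs
          have hcw : (z :: zs).countP (fun y => decide (y ≤ w)) =
              zs.countP (fun y => decide (y ≤ w)) := by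
            rw [List.countP_cons]
            simp [not_le.mpr hwz]
          rw [hcw]
          exact le_trans (H w hwzs) (Fcnt_mono (min_le_min htbound le_rfl))
      · intro H w hw
        have hwz : w < z := hzgt w hw
        have hcw : (z :: zs).countP (fun y => decide (y ≤ w)) =
            zs.countP (fun y => decide (y ≤ w)) := by
          rw [List.countP_cons]; simp [not_le.mpr hwz]
        by_cases hwt : w ≤ t
        · rw [min_eq_right hwt]
          have := H w (List.mem_cons_of_mem z hw)
          rw [hcw] at this
          exact le_trans this (Fcnt_mono (min_le_right _ _))
        · push_neg at hwt
          rw [min_eq_left (le_of_lt hwt)]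
          have hz := H z List.mem_cons_self
          rw [hcountz, hFz] at hz
          exact le_trans List.countP_le_length (by omega)

lemma mem_Ilist {n z : ℕ} {C : List ℕ} :
    z ∈ Ilist n C ↔ 1 ≤ z ∧ z ≤ n ∧ z ∈ C ∧ bar n z ∈ C := by
  simp only [Ilist, List.mem_reverse, List.mem_filter, List.mem_range, decide_eq_true_eq,
    Nat.lt_succ_iff]
  tauto

lemma Ilist_pairwise (n : ℕ) (C : List ℕ) : (Ilist n C).Pairwise (· > ·) := by
  rw [Ilist, List.pairwise_reverse]
  exact (List.pairwise_lt_range.sublist List.filter_sublist).imp (fun h => h)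

lemma Ilist_nodup (n : ℕ) (C : List ℕ) : (Ilist n C).Nodup :=
  (Ilist_pairwise n C).imp (fun h => ne_of_gt h)

lemma col_nodup {n : ℕ} {C : List ℕ} (hC : IsColumn n C) : C.Nodup :=
  (List.isChain_iff_pairwise.mp hC.1).imp (fun h => ne_of_lt h)

lemma count_window {n z : ℕ} {C : List ℕ} (hC : IsColumn n C) (hz1 : 1 ≤ z) (hzn : z ≤ n)
    (hzC : z ∈ C) (hbzC : bar n z ∈ C) :
    C.countP (fun x => decide (x ≤ z ∨ bar n z ≤ x)) + Fcnt n C z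
      = z + (Ilist n C).countP (fun y => decide (y ≤ z)) := by
  classical
  set T := C.toFinset with hT
  have hmemT : ∀ x, x ∈ T ↔ x ∈ C := fun x => List.mem_toFinset
  have hbounds : ∀ x ∈ C, 1 ≤ x ∧ x ≤ 2 * n := hC.2
  -- step 1 : countP = card of Finset filter
  have step1 : C.countP (fun x => decide (x ≤ z ∨ bar n z ≤ x))
      = (T.filter (fun x => x ≤ z ∨ bar n z ≤ x)).card := by
    rw [List.countP_eq_length_filter,
      ← List.toFinset_card_of_nodup ((col_nodup hC).filter _), List.toFinset_filter]
    congr 1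
    ext x
    simp [hT]
  set A := (Finset.Icc 1 z).filter (fun a => a ∈ T) with hA
  set B := (Finset.Icc 1 z).filter (fun a => bar n a ∈ T) with hB
  set Both := (Finset.Icc 1 z).filter (fun a => a ∈ T ∧ bar n a ∈ T) with hBoth
  set Non := (Finset.Icc 1 z).filter (fun a => a ∉ T ∧ bar n a ∉ T) with hNon
  -- step 2 : window card = A.card + B.card
  have step2 : (T.filter (fun x => x ≤ z ∨ bar n z ≤ x)).card = A.card + B.card := by
    have himage : T.filter (fun x => x ≤ z ∨ bar n z ≤ x) = A ∪ B.image (bar n) := by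
      ext x
      simp only [Finset.mem_filter, Finset.mem_union, Finset.mem_image, hA, hB,
        Finset.mem_Icc]
      constructor
      · rintro ⟨hxT, hx⟩
        have hb := hbounds x ((hmemT x).mp hxT)
        rcases hx with hx | hx
        · exact Or.inl ⟨⟨hb.1, hx⟩, hxT⟩
        · refine Or.inr ⟨bar n x, ⟨⟨?_, ?_⟩, ?_⟩, ?_⟩
          · simp only [bar]; omega
          · simp only [bar] at hx ⊢; omega
          · have : bar n (bar n x) = x := by simp only [bar]; omega
            rw [this]; exact hxT
          · simp only [bar]; omega
      · rintro (⟨⟨h1, h2⟩, hxT⟩ | ⟨a, ⟨⟨ha1, ha2⟩, haT⟩, rfl⟩)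
        · exact ⟨hxT, Or.inl h2⟩
        · exact ⟨haT, Or.inr (by simp only [bar]; omega)⟩
    rw [himage, Finset.card_union_of_disjoint, Finset.card_image_of_injOn]
    · intro a ha b hb hab
      simp only [hB, Finset.coe_filter, Set.mem_setOf_eq, Finset.mem_Icc] at ha hb
      simp only [bar] at hab
      omega
    · rw [Finset.disjoint_left]
      intro x hx hx2
      simp only [hA, Finset.mem_filter, Finset.mem_Icc] at hx
      simp only [hB, Finset.mem_image, Finset.mem_filter, Finset.mem_Icc] at hx2
      obtain ⟨a, ⟨⟨ha1, ha2⟩, _⟩, rfl⟩ := hx2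
      simp only [bar] at hx
      omega
  -- step 3 : A.card + B.card + Non.card = z + Both.card
  have step3 : A.card + B.card + Non.card = z + Both.card := by
    have key : ∑ a ∈ Finset.Icc 1 z, (((if a ∈ T then 1 else 0) + if bar n a ∈ T then 1 else 0)
          + if a ∉ T ∧ bar n a ∉ T then 1 else 0)
        = ∑ a ∈ Finset.Icc 1 z, (1 + if a ∈ T ∧ bar n a ∈ T then 1 else 0) := by
      apply Finset.sum_congr rfl
      intro a _
      by_cases h1 : a ∈ T <;> by_cases h2 : bar n a ∈ T <;> simp [h1, h2]
    rw [hA, hB, hNon, hBoth, Finset.card_filter, Finset.card_filter, Finset.card_filter,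
      Finset.card_filter, ← Finset.sum_add_distrib, ← Finset.sum_add_distrib, key,
      Finset.sum_add_distrib, Finset.sum_const, smul_eq_mul, mul_one, Nat.card_Icc]
    omega
  -- step 4 : Non.card = Fcnt n C z
  have step4 : Non.card = Fcnt n C z := by
    congr 1
    ext a
    simp only [hNon, Finset.mem_filter, Finset.mem_Icc, Finset.mem_range, FreeL, hmemT]
    constructor
    · rintro ⟨⟨h1, h2⟩, h3, h4⟩
      have : a ≠ z := fun h => h3 (h ▸ hzC)
      exact ⟨by omega, h1, by omega, h3, h4⟩
    · rintro ⟨h0, h1, h2, h3, h4⟩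
      exact ⟨⟨h1, by omega⟩, h3, h4⟩
  -- step 5 : Both.card = countP over Ilist
  have step5 : (Ilist n C).countP (fun y => decide (y ≤ z)) = Both.card := by
    rw [List.countP_eq_length_filter,
      ← List.toFinset_card_of_nodup ((Ilist_nodup n C).filter _), List.toFinset_filter]
    congr 1
    ext a
    simp only [Finset.mem_filter, List.mem_toFinset, mem_Ilist, decide_eq_true_eq, hBoth,
      Finset.mem_Icc, hmemT]
    constructor
    · rintro ⟨⟨h1, h2, h3, h4⟩, h5⟩
      exact ⟨⟨h1, h5⟩, h3, h4⟩
    · rintro ⟨⟨h1, h5⟩, h3, h4⟩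
      exact ⟨⟨h1, by omega, h3, h4⟩, h5⟩
  rw [step1, step2, step4.symm, step5]
  omega

theorem admissible_iff_canSplit (n : ℕ) (C : List ℕ) (hC : IsColumn n C) :
    OCC n C ↔ CanSplit n C := by
  have key : OCC n C ↔ ∀ z ∈ Ilist n C,
      (Ilist n C).countP (fun y => decide (y ≤ z)) ≤ Fcnt n C (min (n + 1) z) := by
    constructor
    · intro hO z hz
      obtain ⟨h1, h2, h3, h4⟩ := mem_Ilist.mp hz
      have hle := hO z h1 h2 h3 h4
      have hcw := count_window hC h1 h2 h3 h4
      rw [min_eq_right (by omega)]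
      omega
    · intro H i h1 h2 h3 h4
      have hz : i ∈ Ilist n C := mem_Ilist.mpr ⟨h1, h2, h3, h4⟩
      have hle := H i hz
      rw [min_eq_right (by omega)] at hle
      have hcw := count_window hC h1 h2 h3 h4
      omega
  rw [key]
  exact (splitJ_isSome_iff n C _ _ (Ilist_pairwise n C)).symm
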